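/- Let τ_A = −3·I_2 and τ_E = [[−3, 4i],[−4i, −3]] (complex 2×2 matrices). For a real number s, the matrix equation exp(i s τ_A) = exp(i s τ_E) holds if and only if s = κπ/2 for some integer κ. Hence the residual symmetry group Γ = U(1)_A ∩ U(1)_E generated by the common values is the discrete group generated by exp(−3iκπ/2)·I_2, κ ∈ ℤ. -/

import Mathlib

open Matrix

/-- The generator `τ_A = −3·I₂` of `U(1)_A`. -/
noncomputable def tauA : Matrix (Fin 2) (Fin 2) ℂ := (-3 : ℂ) • (1 : Matrix (Fin 2) (Fin 2) ℂ)

/-- The generator `τ_E = [[−3, 4i],[−4i, −3]]` of `U(1)_E`. -/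
noncomputable def tauE : Matrix (Fin 2) (Fin 2) ℂ :=
  !![(-3 : ℂ), 4 * Complex.I; -4 * Complex.I, (-3 : ℂ)]

noncomputable def Umat : Matrix (Fin 2) (Fin 2) ℂ := !![1, 1; Complex.I, -Complex.I]
noncomputable def Uinv : Matrix (Fin 2) (Fin 2) ℂ :=
  !![1/2, -Complex.I/2; 1/2, Complex.I/2]

lemma U_mul_Uinv : Umat * Uinv = 1 := by
  ext i j
  fin_cases i <;> fin_cases j <;>
    simp [Umat, Uinv, Matrix.mul_apply, Fin.sum_univ_two, Complex.ext_iff] <;> ring_nf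

lemma Uinv_mul_U : Uinv * Umat = 1 := by
  ext i j
  fin_cases i <;> fin_cases j <;>
    simp [Umat, Uinv, Matrix.mul_apply, Fin.sum_univ_two, Complex.ext_iff] <;> ring_nf

noncomputable def Uunit : (Matrix (Fin 2) (Fin 2) ℂ)ˣ := ⟨Umat, Uinv, U_mul_Uinv, Uinv_mul_U⟩

lemma diag2 (x y : ℂ) : Matrix.diagonal ![x, y] = !![x, 0; 0, y] := by
  ext i j
  fin_cases i <;> fin_cases j <;> simp [Matrix.diagonal]

lemma tauE_conj (c : ℂ) :
    c • tauE = Umat * Matrix.diagonal ![-7*c, c] * Uinv := by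
  rw [diag2]
  ext i j
  fin_cases i <;> fin_cases j <;>
    simp [tauE, Umat, Uinv, Matrix.mul_apply, Fin.sum_univ_two, Complex.ext_iff] <;> ring_nf <;>
    first | trivial | (simp [Complex.I_sq]; ring)

open NormedSpace in
lemma expE (c : ℂ) :
    NormedSpace.exp (c • tauE) = !![(Complex.exp (-7*c) + Complex.exp c)/2,
        Complex.I * (Complex.exp c - Complex.exp (-7*c))/2;
        Complex.I * (Complex.exp (-7*c) - Complex.exp c)/2,
        (Complex.exp (-7*c) + Complex.exp c)/2] := by
  rw [tauE_conj]
  have h := Matrix.exp_units_conj Uunit (Matrix.diagonal ![-7*c, c])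
  have hu : (Uunit : Matrix (Fin 2) (Fin 2) ℂ) = Umat := rfl
  have hui : ((Uunit⁻¹ : (Matrix (Fin 2) (Fin 2) ℂ)ˣ) : Matrix (Fin 2) (Fin 2) ℂ) = Uinv := rfl
  rw [hu, hui] at h
  rw [h, Matrix.exp_diagonal, Pi.exp_def]
  have : (fun i => NormedSpace.exp (![-7*c, c] i)) = ![Complex.exp (-7*c), Complex.exp c] := by
    funext i
    fin_cases i <;> simp [Complex.exp_eq_exp_ℂ]
  rw [this, diag2]
  ext i j
  fin_cases i <;> fin_cases j <;>
    simp [Umat, Uinv, Matrix.mul_apply, Fin.sum_univ_two] <;> ring_nf <;>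
    first | trivial | (simp [Complex.I_sq]; ring)

open NormedSpace in
lemma expA (c : ℂ) :
    NormedSpace.exp (c • tauA) = Complex.exp (-3*c) • 1 := by
  have h1 : c • tauA = Matrix.diagonal ![-3*c, -3*c] := by
    rw [diag2]
    ext i j
    fin_cases i <;> fin_cases j <;> simp [tauA] <;> ring
  rw [h1, Matrix.exp_diagonal, Pi.exp_def]
  have : (fun i => NormedSpace.exp (![-3*c, -3*c] i)) = ![Complex.exp (-3*c), Complex.exp (-3*c)] := by
    funext i
    fin_cases i <;> simp [Complex.exp_eq_exp_ℂ]
  rw [this, diag2]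
  ext i j
  fin_cases i <;> fin_cases j <;> simp

open NormedSpace in
lemma exp_eq_of (c : ℂ) (h4 : Complex.exp (4 * c) = 1) :
    NormedSpace.exp (c • tauA) = NormedSpace.exp (c • tauE) := by
  rw [expA, expE]
  have hneg4 : Complex.exp (-(4 * c)) = 1 := by
    rw [Complex.exp_neg, h4, inv_one]
  have ha : Complex.exp (-(7 * c)) = Complex.exp (-(3 * c)) := by
    have h5 := Complex.exp_add (-(3*c)) (-(4*c))
    rw [hneg4, mul_one, show -(3*c) + -(4*c) = -(7*c) by ring] at h5
    exact h5
  have hb : Complex.exp c = Complex.exp (-(3 * c)) := by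
    have h5 := Complex.exp_add (-(3*c)) (4*c)
    rw [h4, mul_one, show -(3*c) + 4*c = c by ring] at h5
    exact h5
  ext i j
  fin_cases i <;> fin_cases j <;>
    simp [Matrix.smul_apply, Matrix.one_apply, hb] <;> rw [ha] <;> ring

open NormedSpace in
lemma keyIff (s : ℝ) :
    NormedSpace.exp ((Complex.I * (s : ℂ)) • tauA) = NormedSpace.exp ((Complex.I * (s : ℂ)) • tauE) ↔
      ∃ κ : ℤ, s = κ * Real.pi / 2 := by
  set c : ℂ := Complex.I * (s : ℂ) with hc
  constructor
  · intro h
    rw [expA, expE] at h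
    have e01 := congrFun (congrFun h 0) 1
    have e00 := congrFun (congrFun h 0) 0
    simp [Matrix.smul_apply, Matrix.one_apply] at e01 e00
    have h2 : Complex.exp c - Complex.exp (-(7*c)) = 0 := by
      have h' := e01.symm
      rw [div_eq_zero_iff] at h'
      rcases h' with h' | h'
      · rcases mul_eq_zero.mp h' with h'' | h''
        · exact absurd h'' Complex.I_ne_zero
        · exact h''
      · norm_num at h'
    have hba : Complex.exp c = Complex.exp (-(7*c)) := sub_eq_zero.mp h2
    have hh : Complex.exp (-(3*c)) = Complex.exp c := by
      rw [e00, ← hba]; ring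
    have h4 : Complex.exp (4 * c) = 1 := by
      have h5 := Complex.exp_sub c (-(3*c))
      rw [hh, div_self (Complex.exp_ne_zero _)] at h5
      rw [show (4:ℂ)*c = c - -(3*c) by ring]
      exact h5
    obtain ⟨n, hn⟩ := Complex.exp_eq_one_iff.mp h4
    rw [hc] at hn
    refine ⟨n, ?_⟩
    have hsc : (s : ℂ) = (n : ℂ) * (Real.pi : ℂ) / 2 := by
      linear_combination (-Complex.I/4) * hn + ((s:ℂ) - (n:ℂ) * (Real.pi:ℂ) / 2) * Complex.I_sq
    have : (s : ℂ) = (((n : ℝ) * Real.pi / 2 : ℝ) : ℂ) := by push_cast; exact hsc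
    exact_mod_cast this
  · rintro ⟨κ, rfl⟩
    have h4 : Complex.exp (4 * c) = 1 := by
      rw [hc, show (4:ℂ) * (Complex.I * (((κ : ℝ) * Real.pi / 2 : ℝ) : ℂ)) =
        (κ : ℂ) * (2 * (Real.pi : ℂ) * Complex.I) by push_cast; ring]
      exact Complex.exp_int_mul_two_pi_mul_I κ
    exact exp_eq_of c h4

open NormedSpace in
/-- For a real number `s`, the matrix equation
`exp(i s τ_A) = exp(i s τ_E)` holds if and only if `s = κπ/2` for some integer `κ`.
Hence the residual symmetry group `Γ = U(1)_A ∩ U(1)_E`, generated by the common values,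
is the discrete group generated by `exp(−3iκπ/2)·I₂`, `κ ∈ ℤ`. -/
theorem residual_symmetry_intersection :
    (∀ s : ℝ,
      NormedSpace.exp ((Complex.I * (s : ℂ)) • tauA) = NormedSpace.exp ((Complex.I * (s : ℂ)) • tauE) ↔
        ∃ κ : ℤ, s = κ * Real.pi / 2) ∧
    ({M : Matrix (Fin 2) (Fin 2) ℂ | ∃ s : ℝ,
        NormedSpace.exp ((Complex.I * (s : ℂ)) • tauA) = NormedSpace.exp ((Complex.I * (s : ℂ)) • tauE) ∧
        M = NormedSpace.exp ((Complex.I * (s : ℂ)) • tauA)} =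
      {M : Matrix (Fin 2) (Fin 2) ℂ | ∃ κ : ℤ,
        M = Complex.exp (-3 * Complex.I * (κ : ℂ) * Real.pi / 2) •
              (1 : Matrix (Fin 2) (Fin 2) ℂ)}) := by
  refine ⟨keyIff, ?_⟩
  ext M
  simp only [Set.mem_setOf_eq]
  constructor
  · rintro ⟨s, heq, rfl⟩
    obtain ⟨κ, hκ⟩ := (keyIff s).mp heq
    refine ⟨κ, ?_⟩
    rw [expA, show (-3:ℂ) * (Complex.I * (s : ℂ)) =
      -3 * Complex.I * (κ : ℂ) * (Real.pi : ℂ) / 2 by rw [hκ]; push_cast; ring]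
  · rintro ⟨κ, rfl⟩
    refine ⟨(κ * Real.pi / 2 : ℝ), (keyIff _).mpr ⟨κ, rfl⟩, ?_⟩
    rw [expA, show (-3:ℂ) * (Complex.I * (((κ : ℝ) * Real.pi / 2 : ℝ) : ℂ)) =
      -3 * Complex.I * (κ : ℂ) * (Real.pi : ℂ) / 2 by push_cast; ring]
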